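/- (Specialization of Theorem 3 to the calculus of variations) Let a < b ≤ t be real numbers, 0 < α < 1, 0 < β < 1, γ ∈ ℂ, let L : ℝ × ℝ × ℝ → ℝ be continuously differentiable, take φ(u,q,τ) = u, and let H^{α,β}(u,q,p,τ) = L(u,q,τ)(t−τ)^{α−1} + p·u. If functions u, q, p^{α,β} on (a,b) satisfy the fractional stationary condition ∂H^{α,β}/∂u = 0 and the first fractional Hamilton equation D_γ^{α,β} q(τ) = ∂H^{α,β}/∂p, then for every τ ∈ (a,b): p^{α,β}(τ) = −(∂L/∂u)(u(τ),q(τ),τ)(t−τ)^{α−1} and u(τ) = D_γ^{α,β} q(τ); consequently, the second fractional Hamilton equation D_{−γ;τ}^{β,α} p^{α,β}(τ) = −(∂L/∂q)(u(τ),q(τ),τ)(t−τ)^{α−1} becomes D_{−γ;τ}^{β,α}[σ ↦ (∂L/∂u)(D_γ^{α,β} q(σ), q(σ), σ)(t−σ)^{α−1}](τ) = (∂L/∂q)(D_γ^{α,β} q(τ), q(τ), τ)(t−τ)^{α−1}. -/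

import Mathlib

open MeasureTheory Real Set

/-- `t ↦ (1/Γ(1-α)) ∫_a^t f(τ)(t-τ)^{-α} dτ` for a complex-valued `f`. -/
noncomputable def leftKer (a α : ℝ) (f : ℝ → ℂ) (t : ℝ) : ℂ :=
  ((1 / Real.Gamma (1 - α) : ℝ) : ℂ) * ∫ τ in a..t, f τ * (((t - τ) ^ (-α) : ℝ) : ℂ)

/-- Left Riemann–Liouville fractional derivative of order `α ∈ (0,1)`. -/
noncomputable def leftRLD (a α : ℝ) (f : ℝ → ℂ) (t : ℝ) : ℂ :=
  deriv (leftKer a α f) t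

/-- `s ↦ (1/Γ(1-β)) ∫_s^b f(τ)(τ-s)^{-β} dτ` for a complex-valued `f`. -/
noncomputable def rightKer (b β : ℝ) (f : ℝ → ℂ) (s : ℝ) : ℂ :=
  ((1 / Real.Gamma (1 - β) : ℝ) : ℂ) * ∫ τ in s..b, f τ * (((τ - s) ^ (-β) : ℝ) : ℂ)

/-- Right Riemann–Liouville fractional derivative of order `β ∈ (0,1)`. -/
noncomputable def rightRLD (b β : ℝ) (f : ℝ → ℂ) (s : ℝ) : ℂ :=
  - deriv (rightKer b β f) s

/-- The Cresson–Darses fractional derivative operator of order `(α,β)`: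
`D_γ^{α,β} = ½(D_{a+}^α − D_{b-}^β) + (iγ/2)(D_{a+}^α + D_{b-}^β)`. -/
noncomputable def cressonDarses (a b α β : ℝ) (γ : ℂ) (f : ℝ → ℂ) (t : ℝ) : ℂ :=
  (1 / 2 : ℂ) * (leftRLD a α f t - rightRLD b β f t)
    + Complex.I * γ / 2 * (leftRLD a α f t + rightRLD b β f t)

/-- The Cresson–Darses operator applied to a real-valued path `r`. -/
noncomputable def cressonDarsesR (a b α β : ℝ) (γ : ℂ) (r : ℝ → ℝ) : ℝ → ℂ :=
  cressonDarses a b α β γ (fun s => (r s : ℂ))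

/-- The fractional Hamiltonian for the calculus-of-variations case `φ(u,q,τ) = u`:
`H^{α,β}(u,q,p,τ) = L(u,q,τ)(t−τ)^{α−1} + p·u`. -/
noncomputable def fracHamCV (t α : ℝ) (L : ℝ → ℝ → ℝ → ℝ)
    (u q : ℝ) (p : ℂ) (τ : ℝ) : ℂ :=
  ((L u q τ * (t - τ) ^ (α - 1) : ℝ) : ℂ) + p * (u : ℂ)

lemma leftKer_eq_on {a b α : ℝ} {f h : ℝ → ℂ} (hfh : ∀ σ ∈ Ioo a b, f σ = h σ)
    {x : ℝ} (hx : x ∈ Ioo a b) : leftKer a α f x = leftKer a α h x := by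
  unfold leftKer
  congr 1
  apply intervalIntegral.integral_congr_ae
  apply Filter.Eventually.of_forall
  intro y hy
  rw [Set.uIoc_of_le (le_of_lt hx.1)] at hy
  rw [hfh y ⟨hy.1, lt_of_le_of_lt hy.2 hx.2⟩]

lemma rightKer_eq_on {a b β : ℝ} {f h : ℝ → ℂ} (hfh : ∀ σ ∈ Ioo a b, f σ = h σ)
    {x : ℝ} (hx : x ∈ Ioo a b) : rightKer b β f x = rightKer b β h x := by
  unfold rightKer
  congr 1
  apply intervalIntegral.integral_congr_ae
  have hb : ∀ᵐ y : ℝ, y ≠ b := by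
    simp only [MeasureTheory.ae_iff]
    simpa using measure_singleton (b : ℝ)
  filter_upwards [hb] with y hyb hy
  rw [Set.uIoc_of_le (le_of_lt hx.2)] at hy
  rw [hfh y ⟨lt_trans hx.1 hy.1, lt_of_le_of_ne hy.2 hyb⟩]

lemma cressonDarses_congr {a b : ℝ} (α β : ℝ) (γ : ℂ) {f h : ℝ → ℂ}
    (hfh : ∀ σ ∈ Ioo a b, f σ = h σ) {τ : ℝ} (hτ : τ ∈ Ioo a b) :
    cressonDarses a b α β γ f τ = cressonDarses a b α β γ h τ := by
  have hnb : Ioo a b ∈ nhds τ := isOpen_Ioo.mem_nhds hτ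
  have hl : leftRLD a α f τ = leftRLD a α h τ := by
    unfold leftRLD
    apply Filter.EventuallyEq.deriv_eq
    filter_upwards [hnb] with x hx using leftKer_eq_on hfh hx
  have hr : rightRLD b β f τ = rightRLD b β h τ := by
    unfold rightRLD
    congr 1
    apply Filter.EventuallyEq.deriv_eq
    filter_upwards [hnb] with x hx using rightKer_eq_on hfh hx
  unfold cressonDarses; rw [hl, hr]

lemma cressonDarses_neg (a b α β : ℝ) (γ : ℂ) (f : ℝ → ℂ) (τ : ℝ) :
    cressonDarses a b α β γ (fun s => -f s) τ = -cressonDarses a b α β γ f τ := by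
  have hlk : leftKer a α (fun s => -f s) = fun x => -leftKer a α f x := by
    funext x
    simp only [leftKer, neg_mul]
    rw [intervalIntegral.integral_neg, mul_neg]
  have hrk : rightKer b β (fun s => -f s) = fun x => -rightKer b β f x := by
    funext x
    simp only [rightKer, neg_mul]
    rw [intervalIntegral.integral_neg, mul_neg]
  have hl : leftRLD a α (fun s => -f s) τ = -leftRLD a α f τ := by
    unfold leftRLD; rw [hlk, deriv.fun_neg]
  have hr : rightRLD b β (fun s => -f s) τ = -rightRLD b β f τ := by
    unfold rightRLD; rw [hrk, deriv.fun_neg]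
  unfold cressonDarses; rw [hl, hr]; ring

/-- Specialization of Theorem 3 to the fractional problem of the calculus of variations
(`φ(u,q,τ) = u`).  The stationary condition and the first Hamilton equation yield
`p^{α,β}(τ) = −(∂L/∂u)(u(τ),q(τ),τ)(t−τ)^{α−1}` and `u(τ) = D_γ^{α,β} q(τ)`;
consequently, the second Hamilton equation becomes the `(α,β)` fractional
Euler–Lagrange equation `D_{−γ;τ}^{β,α}[σ ↦ (∂L/∂u)(D_γ^{α,β}q(σ),q(σ),σ)(t−σ)^{α−1}](τ)
  = (∂L/∂q)(D_γ^{α,β}q(τ),q(τ),τ)(t−τ)^{α−1}` (where, by the derived identity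
`u = D_γ^{α,β} q` on `(a,b)`, the velocity argument is written via `u`). -/
theorem fractional_hamilton_specialization_to_cov
    (a b t α β : ℝ) (hab : a < b) (hbt : b ≤ t)
    (hα : 0 < α) (hα1 : α < 1) (hβ : 0 < β) (hβ1 : β < 1) (γ : ℂ)
    (L : ℝ → ℝ → ℝ → ℝ)
    (hL : ContDiff ℝ 1 fun x : ℝ × ℝ × ℝ => L x.1 x.2.1 x.2.2)
    (u q : ℝ → ℝ) (p : ℝ → ℂ)
    -- the fractional stationary condition ∂H/∂u = 0:
    (hstat : ∀ τ ∈ Ioo a b,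
      deriv (fun u' : ℝ => fracHamCV t α L u' (q τ) (p τ) τ) (u τ) = 0)
    -- the first fractional Hamilton equation D_γ^{α,β} q = ∂H/∂p:
    (hham1 : ∀ τ ∈ Ioo a b,
      cressonDarsesR a b α β γ q τ
        = deriv (fun p' : ℂ => fracHamCV t α L (u τ) (q τ) p' τ) (p τ)) :
    (∀ τ ∈ Ioo a b,
      p τ = -((deriv (fun u' : ℝ => L u' (q τ) τ) (u τ) * (t - τ) ^ (α - 1) : ℝ) : ℂ) ∧
      (u τ : ℂ) = cressonDarsesR a b α β γ q τ) ∧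
    -- consequently, the second fractional Hamilton equation
    -- D_{−γ;τ}^{β,α} p = −(∂L/∂q)(t−τ)^{α−1} becomes the Euler–Lagrange equation:
    ((∀ τ ∈ Ioo a b,
        cressonDarses a b β α (-γ) p τ
          = -((deriv (fun q' : ℝ => L (u τ) q' τ) (q τ) * (t - τ) ^ (α - 1) : ℝ) : ℂ)) →
      ∀ τ ∈ Ioo a b,
        cressonDarses a b β α (-γ)
          (fun σ => ((deriv (fun u' : ℝ => L u' (q σ) σ) (u σ)
            * (t - σ) ^ (α - 1) : ℝ) : ℂ)) τ
          = ((deriv (fun q' : ℝ => L (u τ) q' τ) (q τ) * (t - τ) ^ (α - 1) : ℝ) : ℂ)) := by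
  -- Part 1: derive p and u identities at each τ ∈ (a,b)
  have key : ∀ τ ∈ Ioo a b,
      p τ = -((deriv (fun u' : ℝ => L u' (q τ) τ) (u τ) * (t - τ) ^ (α - 1) : ℝ) : ℂ) ∧
      (u τ : ℂ) = cressonDarsesR a b α β γ q τ := by
    intro τ hτ
    constructor
    · -- from the stationary condition
      have hLd : DifferentiableAt ℝ (fun u' : ℝ => L u' (q τ) τ) (u τ) := by
        have h1 : DifferentiableAt ℝ (fun x : ℝ × ℝ × ℝ => L x.1 x.2.1 x.2.2)
            (u τ, q τ, τ) := (hL.differentiable one_ne_zero).differentiableAt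
        have h2 : DifferentiableAt ℝ (fun u' : ℝ => ((u', q τ, τ) : ℝ × ℝ × ℝ)) (u τ) := by
          fun_prop
        exact h1.comp (u τ) h2
      set dL := deriv (fun u' : ℝ => L u' (q τ) τ) (u τ) with hdL
      have h1 : HasDerivAt (fun u' : ℝ => L u' (q τ) τ * (t - τ) ^ (α - 1))
          (dL * (t - τ) ^ (α - 1)) (u τ) := hLd.hasDerivAt.mul_const _
      have h2 : HasDerivAt (fun u' : ℝ =>
          ((L u' (q τ) τ * (t - τ) ^ (α - 1) : ℝ) : ℂ))
          ((dL * (t - τ) ^ (α - 1) : ℝ) : ℂ) (u τ) := h1.ofReal_comp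
      have h3 : HasDerivAt (fun u' : ℝ => p τ * (u' : ℂ)) (p τ) (u τ) := by
        have := ((hasDerivAt_id (u τ)).ofReal_comp).const_mul (p τ)
        simpa using this
      have h4 : HasDerivAt (fun u' : ℝ => fracHamCV t α L u' (q τ) (p τ) τ)
          (((dL * (t - τ) ^ (α - 1) : ℝ) : ℂ) + p τ) (u τ) := by
        simpa [fracHamCV] using h2.fun_add h3
      have h5 := hstat τ hτ
      rw [h4.deriv] at h5
      linear_combination h5
    · -- from the first Hamilton equation
      have h6 : HasDerivAt (fun p' : ℂ => fracHamCV t α L (u τ) (q τ) p' τ)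
          ((u τ : ℂ)) (p τ) := by
        have := ((hasDerivAt_id (p τ)).mul_const ((u τ : ℂ))).const_add
          (((L (u τ) (q τ) τ * (t - τ) ^ (α - 1) : ℝ) : ℂ))
        simpa [fracHamCV] using this
      rw [hham1 τ hτ, h6.deriv]
  refine ⟨key, ?_⟩
  -- Part 2: the second Hamilton equation becomes the Euler–Lagrange equation
  intro hham2 τ hτ
  have hcongr : ∀ σ ∈ Ioo a b,
      ((deriv (fun u' : ℝ => L u' (q σ) σ) (u σ) * (t - σ) ^ (α - 1) : ℝ) : ℂ)
        = -(p σ) := by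
    intro σ hσ
    have := (key σ hσ).1
    rw [this]; ring
  rw [cressonDarses_congr β α (-γ) hcongr hτ, cressonDarses_neg a b β α (-γ) p τ,
    hham2 τ hτ]
  ring
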